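/- arXiv:1304.5831 — 5 statements merged into one kernel-verified Lean document; each statement's English description precedes it below -/
import Mathlib

section
/- Let (f,g) ∈ 𝒞 with unique minimal set K, and let J⊆I be a nonempty open interval intersecting K. If J ⊆ int(F₁\W), then 𝓕(J)∩K ≠ ∅; symmetrically, if J ⊆ int(G₁\W), then 𝓖(J)∩K ≠ ∅. -/
open Set Function MeasureTheory

noncomputable section

namespace IFSPaper

/-- The closed unit interval `I = [0,1]` as a subset of `ℝ`. -/
def unitI : Set ℝ := Set.Icc 0 1

/-- Membership in the class `𝒜`: `f, g : I → I` are `C¹` diffeomorphisms onto their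
images with `f 0 = 0`, `g 1 = 1`, `f x < x < g x` on `(0,1)` and `0 < g 0 < f 1 < 1`. -/
structure MemA (f g : ℝ → ℝ) : Prop where
  f_maps : Set.MapsTo f unitI unitI
  g_maps : Set.MapsTo g unitI unitI
  f_c1 : ContDiff ℝ 1 f
  g_c1 : ContDiff ℝ 1 g
  f_inj : Set.InjOn f unitI
  g_inj : Set.InjOn g unitI
  f_deriv_ne : ∀ x ∈ unitI, deriv f x ≠ 0
  g_deriv_ne : ∀ x ∈ unitI, deriv g x ≠ 0
  f_zero : f 0 = 0
  g_one : g 1 = 1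
  f_lt_id : ∀ x ∈ Set.Ioo (0:ℝ) 1, f x < x
  id_lt_g : ∀ x ∈ Set.Ioo (0:ℝ) 1, x < g x
  g0_pos : 0 < g 0
  g0_lt_f1 : g 0 < f 1
  f1_lt_one : f 1 < 1

/-- The element of the semigroup `⟨f,g⟩₊` associated to a word in the two generators
(`true ↦ f`, `false ↦ g`). -/
def word (f g : ℝ → ℝ) : List Bool → ℝ → ℝ
  | [] => id
  | b :: t => (if b then f else g) ∘ word f g t

/-- The semigroup orbit `O₊(x) = {φ x : φ ∈ ⟨f,g⟩₊}` of a point `x`. -/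
def orbitP (f g : ℝ → ℝ) (x : ℝ) : Set ℝ :=
  {y | ∃ w : List Bool, w ≠ [] ∧ word f g w x = y}

/-- `K` is a minimal set for the action of `⟨f,g⟩₊` on `I`. -/
def IsMinimalSet (f g : ℝ → ℝ) (K : Set ℝ) : Prop :=
  K.Nonempty ∧ K ⊆ unitI ∧ ∀ x ∈ K, closure (orbitP f g x) = K

/-- The overlapping region `W = [g 0, f 1]`. -/
def ovW (f g : ℝ → ℝ) : Set ℝ := Set.Icc (g 0) (f 1)

/-- The fundamental domain `Fₙ = [f^[n+1] 1, f^[n] 1]`. -/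
def Fint (f : ℝ → ℝ) (n : ℕ) : Set ℝ := Set.Icc (f^[n+1] 1) (f^[n] 1)

/-- The fundamental domain `Gₙ = [g^[n] 0, g^[n+1] 0]`. -/
def Gint (g : ℝ → ℝ) (n : ℕ) : Set ℝ := Set.Icc (g^[n] 0) (g^[n+1] 0)

/-- Single overlapping property `So`: `f² 1 < g 0` and `f 1 < g² 0`. -/
def So (f g : ℝ → ℝ) : Prop := f (f 1) < g 0 ∧ f 1 < g (g 0)

/-- A (nonempty) closed bounded interval. -/
def IsClosedInterval (A : Set ℝ) : Prop := ∃ a b : ℝ, a ≤ b ∧ A = Set.Icc a b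

/-- A closed bounded interval with nonempty interior. -/
def IsNondegClosedInterval (A : Set ℝ) : Prop := ∃ a b : ℝ, a < b ∧ A = Set.Icc a b

/-- A nonempty open bounded interval. -/
def IsOpenInterval (J : Set ℝ) : Prop := ∃ a b : ℝ, a < b ∧ J = Set.Ioo a b

/-- Hole property `Ho` witnessed by the pair of holes `(Hf, Hg)`. -/
def HoleAt (f g : ℝ → ℝ) (Hf Hg : Set ℝ) : Prop :=
  IsNondegClosedInterval Hf ∧ IsNondegClosedInterval Hg ∧
  Hf ⊆ interior (Fint f 1 \ ovW f g) ∧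
  Hg ⊆ interior (Gint g 1 \ ovW f g) ∧
  g '' Hf = Hg ∧ f '' Hg = Hf

/-- Hole property `Ho`. -/
def Ho (f g : ℝ → ℝ) : Prop := ∃ Hf Hg : Set ℝ, HoleAt f g Hf Hg

/-- The induced (first-return) map `𝓕 : F₁ \ {f 1} → G₁`,
`𝓕 x = g^[-n x] (f⁻¹ x)` where `n x` is least with `g^[-n x] (f⁻¹ x) ∈ G₁`. -/
def calF (f g : ℝ → ℝ) (x : ℝ) : ℝ :=
  (Function.invFunOn g unitI)^[sInf {n : ℕ |
      (Function.invFunOn g unitI)^[n] (Function.invFunOn f unitI x) ∈ Gint g 1}]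
    (Function.invFunOn f unitI x)

/-- The induced (first-return) map `𝓖 : G₁ \ {g 0} → F₁`. -/
def calG (f g : ℝ → ℝ) (x : ℝ) : ℝ :=
  (Function.invFunOn f unitI)^[sInf {n : ℕ |
      (Function.invFunOn f unitI)^[n] (Function.invFunOn g unitI x) ∈ Fint f 1}]
    (Function.invFunOn g unitI x)

/-- Eventual expansion property `Ee`: `𝓕` is uniformly expanding outside `Hf`
and `𝓖` outside `Hg` (at all points where the derivative makes sense). -/
def Ee (f g : ℝ → ℝ) (Hf Hg : Set ℝ) : Prop :=
  ∃ μ : ℝ, 1 < μ ∧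
    (∀ y ∈ Fint f 1 \ Hf, DifferentiableAt ℝ (calF f g) y → μ < deriv (calF f g) y) ∧
    (∀ y ∈ Gint g 1 \ Hg, DifferentiableAt ℝ (calG f g) y → μ < deriv (calG f g) y)

/-- The ruination region `R_f = 𝓕⁻¹(Hg) ⊆ F₁`. -/
def Rf (f g : ℝ → ℝ) (Hg : Set ℝ) : Set ℝ :=
  {x | x ∈ Fint f 1 \ {f 1} ∧ calF f g x ∈ Hg}

/-- The ruination region `R_g = 𝓖⁻¹(Hf) ⊆ G₁`. -/
def Rg (f g : ℝ → ℝ) (Hf : Set ℝ) : Set ℝ :=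
  {x | x ∈ Gint g 1 \ {g 0} ∧ calG f g x ∈ Hf}

/-- Castration property `Ca`: `W ⊆ int R_f ∪ int R_g`. -/
def Ca (f g : ℝ → ℝ) (Hf Hg : Set ℝ) : Prop :=
  ovW f g ⊆ interior (Rf f g Hg) ∪ interior (Rg f g Hf)

/-- Membership in the class `𝒞` with the given holes `(Hf, Hg)`:
`(f,g) ∈ 𝒜` together with `So`, `Ho`, `Ee` and `Ca`. -/
def MemC (f g : ℝ → ℝ) (Hf Hg : Set ℝ) : Prop :=
  MemA f g ∧ So f g ∧ HoleAt f g Hf Hg ∧ Ee f g Hf Hg ∧ Ca f g Hf Hg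

/-- The interval `I₋₁ = [0, 1/3 - ε]` of the appendix example. -/
def Im1 (ε : ℝ) : Set ℝ := Set.Icc 0 (1/3 - ε)

/-- The interval `I₀ = [1/3 + ε, 2/3 - ε]` of the appendix example. -/
def Iz (ε : ℝ) : Set ℝ := Set.Icc (1/3 + ε) (2/3 - ε)

/-- The interval `I₁ = [2/3 + ε, 1]` of the appendix example. -/
def Ip1 (ε : ℝ) : Set ℝ := Set.Icc (2/3 + ε) 1

/-- The inclusion property of the appendix example. -/
def InclusionProp (f g : ℝ → ℝ) (ε : ℝ) : Prop :=
  f '' Im1 ε ⊆ Im1 ε ∧ f '' Iz ε ⊆ interior (Im1 ε) ∧ f '' Ip1 ε ⊆ interior (Iz ε) ∧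
  g '' Ip1 ε ⊆ Ip1 ε ∧ g '' Iz ε ⊆ interior (Ip1 ε) ∧ g '' Im1 ε ⊆ interior (Iz ε)

/-- The strong uniform contraction property of the appendix example. -/
def StrongContraction (f g : ℝ → ℝ) (ε lam : ℝ) : Prop :=
  ∀ x ∈ Im1 ε ∪ Iz ε ∪ Ip1 ε, deriv f x < lam ∧ deriv g x < lam


/-! ### Auxiliary lemmas -/

lemma zero_mem_unitI : (0:ℝ) ∈ unitI := ⟨le_refl 0, zero_le_one⟩

lemma one_mem_unitI : (1:ℝ) ∈ unitI := ⟨zero_le_one, le_refl 1⟩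

lemma aux_strictMonoOn {φ : ℝ → ℝ} (h1 : ContDiff ℝ 1 φ)
    (hne : ∀ x ∈ unitI, deriv φ x ≠ 0) (hlt : φ 0 < φ 1) :
    StrictMonoOn φ unitI := by
  have hcont : Continuous (deriv φ) := h1.continuous_deriv le_rfl
  have h01 : Set.uIcc (0:ℝ) 1 = unitI := Set.uIcc_of_le zero_le_one
  have hdpos : ∀ x ∈ unitI, 0 < deriv φ x := by
    by_contra h
    push_neg at h
    obtain ⟨c, hc, hc0⟩ := h
    have hcneg : deriv φ c < 0 := lt_of_le_of_ne hc0 (hne c hc)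
    have hneg : ∀ x ∈ unitI, deriv φ x < 0 := by
      intro d hd
      rcases lt_or_ge (deriv φ d) 0 with h' | h'
      · exact h'
      exfalso
      have hdp : 0 < deriv φ d := lt_of_le_of_ne h' (Ne.symm (hne d hd))
      have hsub : Set.uIcc c d ⊆ unitI := by
        rw [← h01]
        exact Set.uIcc_subset_uIcc (h01 ▸ hc) (h01 ▸ hd)
      have h0m : (0:ℝ) ∈ Set.uIcc (deriv φ c) (deriv φ d) :=
        Set.mem_uIcc.mpr (Or.inl ⟨hcneg.le, hdp.le⟩)
      obtain ⟨x, hx, hx0⟩ := intermediate_value_uIcc (hcont.continuousOn) h0m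
      exact hne x (hsub hx) hx0
    have hanti : StrictAntiOn φ unitI :=
      strictAntiOn_of_deriv_neg (convex_Icc 0 1) h1.continuous.continuousOn
        (fun x hx => hneg x (interior_subset hx))
    have := hanti zero_mem_unitI one_mem_unitI zero_lt_one
    linarith
  exact strictMonoOn_of_deriv_pos (convex_Icc 0 1) h1.continuous.continuousOn
    (fun x hx => hdpos x (interior_subset hx))

lemma f_strictMono {f g : ℝ → ℝ} (hA : MemA f g) : StrictMonoOn f unitI :=
  aux_strictMonoOn hA.f_c1 hA.f_deriv_ne
    (by rw [hA.f_zero]; linarith [hA.g0_pos, hA.g0_lt_f1])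

lemma g_strictMono {f g : ℝ → ℝ} (hA : MemA f g) : StrictMonoOn g unitI :=
  aux_strictMonoOn hA.g_c1 hA.g_deriv_ne
    (by rw [hA.g_one]; linarith [hA.g0_pos, hA.g0_lt_f1, hA.f1_lt_one])

lemma g0_mem_unitI {f g : ℝ → ℝ} (hA : MemA f g) : g 0 ∈ unitI :=
  ⟨hA.g0_pos.le, by linarith [hA.g0_lt_f1, hA.f1_lt_one]⟩

lemma f1_mem_unitI {f g : ℝ → ℝ} (hA : MemA f g) : f 1 ∈ unitI :=
  ⟨by linarith [hA.g0_pos, hA.g0_lt_f1], hA.f1_lt_one.le⟩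

lemma word_maps {f g : ℝ → ℝ} (hA : MemA f g) :
    ∀ (w : List Bool) (x : ℝ), x ∈ unitI → word f g w x ∈ unitI := by
  intro w
  induction w with
  | nil => intro x hx; simpa [word] using hx
  | cons b t ih =>
      intro x hx
      have h := ih x hx
      cases b
      · simpa [word] using hA.g_maps h
      · simpa [word] using hA.f_maps h

lemma word_mem_K {f g : ℝ → ℝ} {K : Set ℝ} (hK : IsMinimalSet f g K)
    (w : List Bool) {x : ℝ} (hx : x ∈ K) : word f g w x ∈ K := by
  cases w with
  | nil => simpa [word] using hx
  | cons b t =>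
      have h1 : word f g (b :: t) x ∈ orbitP f g x := ⟨b :: t, by simp, rfl⟩
      have h2 := hK.2.2 x hx
      rw [← h2]
      exact subset_closure h1

lemma invFunOn_eq_self {ψ : ℝ → ℝ} (hinj : Set.InjOn ψ unitI) {x y : ℝ}
    (hx : x ∈ unitI) (hxy : ψ x = y) : Function.invFunOn ψ unitI y = x := by
  have hex : ∃ a ∈ unitI, ψ a = y := ⟨x, hx, hxy⟩
  exact hinj (Function.invFunOn_mem hex) hx ((Function.invFunOn_eq hex).trans hxy.symm)

lemma invFunOn_iterate {ψ : ℝ → ℝ} (hinj : Set.InjOn ψ unitI) {n : ℕ} {c : ℕ → ℝ}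
    (hstep : ∀ i < n, ψ (c (i + 1)) = c i) (hmem : ∀ i ≤ n, c i ∈ unitI) :
    ∀ j ≤ n, (Function.invFunOn ψ unitI)^[j] (c 0) = c j := by
  intro j
  induction j with
  | zero => intro _; simp
  | succ j ih =>
      intro hj
      rw [Function.iterate_succ_apply', ih (Nat.le_of_succ_le hj)]
      exact invFunOn_eq_self hinj (hmem (j + 1) hj) (hstep j (Nat.lt_of_succ_le hj))

lemma mem_Gint1 {g : ℝ → ℝ} {x : ℝ} : x ∈ Gint g 1 ↔ g 0 ≤ x ∧ x ≤ g (g 0) := by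
  have h1 : g^[1] (0:ℝ) = g 0 := Function.iterate_one g ▸ rfl
  have h2 : g^[1+1] (0:ℝ) = g (g 0) := by
    rw [Function.iterate_succ_apply', Function.iterate_one]
  rw [Gint, Set.mem_Icc, h1, h2]

lemma mem_Fint1 {f : ℝ → ℝ} {x : ℝ} : x ∈ Fint f 1 ↔ f (f 1) ≤ x ∧ x ≤ f 1 := by
  have h1 : f^[1] (1:ℝ) = f 1 := Function.iterate_one f ▸ rfl
  have h2 : f^[1+1] (1:ℝ) = f (f 1) := by
    rw [Function.iterate_succ_apply', Function.iterate_one]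
  rw [Fint, Set.mem_Icc, h1, h2]

lemma chainF {f g : ℝ → ℝ} {K : Set ℝ} (hA : MemA f g) (hSo : So f g)
    (hK : IsMinimalSet f g K) :
    ∀ w : List Bool, ∀ y : ℝ, y ∈ K → y ∈ unitI → y < g 0 → g 0 ≤ word f g w y →
      ∃ n : ℕ, ∃ c : ℕ → ℝ, c 0 = word f g w y ∧ (∀ i < n, g (c (i + 1)) = c i) ∧
        (∀ i ≤ n, c i ∈ K ∧ c i ∈ unitI) ∧ c n ∈ Gint g 1 := by
  have hmf := f_strictMono hA
  have hmg := g_strictMono hA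
  intro w
  induction w with
  | nil =>
      intro y _ _ hy hge
      simp only [word, id] at hge
      linarith
  | cons b t ih =>
      intro y hyK hyI hy hge
      set z' := word f g t y with hz'
      have hz'I : z' ∈ unitI := word_maps hA t y hyI
      have hz'K : z' ∈ K := word_mem_K hK t hyK
      have hzK : word f g (b :: t) y ∈ K := word_mem_K hK _ hyK
      have hzI : word f g (b :: t) y ∈ unitI := word_maps hA _ y hyI
      by_cases hz : word f g (b :: t) y ∈ Gint g 1
      · exact ⟨0, fun _ => word f g (b :: t) y, rfl,
          fun i hi => absurd hi (Nat.not_lt_zero i), fun i _ => ⟨hzK, hzI⟩, hz⟩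
      · have hz2 : g (g 0) < word f g (b :: t) y := by
          by_contra hle
          push_neg at hle
          exact hz (mem_Gint1.mpr ⟨hge, hle⟩)
        cases b with
        | true =>
            exfalso
            have hwt : word f g (true :: t) y = f z' := by rw [hz']; rfl
            rw [hwt] at hz2
            have hle : f z' ≤ f 1 := hmf.monotoneOn hz'I one_mem_unitI hz'I.2
            have := hSo.2
            linarith
        | false =>
            have hwt : word f g (false :: t) y = g z' := by rw [hz']; rfl
            rw [hwt] at hz2 hzK hzI ⊢
            have hz'g : g 0 ≤ z' := by
              by_contra hlt
              push_neg at hlt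
              have : g z' < g (g 0) := hmg hz'I (g0_mem_unitI hA) hlt
              linarith
            have hz'g' : g 0 ≤ word f g t y := by rw [← hz']; exact hz'g
            obtain ⟨n, c, hc0, hstep, hmem, hG⟩ := ih y hyK hyI hy hz'g'
            refine ⟨n + 1, fun i => Nat.rec (motive := fun _ => ℝ) (g z') (fun j _ => c j) i,
              rfl, ?_, ?_, ?_⟩
            · intro i hi
              cases i with
              | zero =>
                  show g (c 0) = g z'
                  rw [hc0, ← hz']
              | succ j =>
                  show g (c (j + 1)) = c j
                  exact hstep j (by omega)
            · intro i hi
              cases i with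
              | zero => exact ⟨hzK, hzI⟩
              | succ j => exact hmem j (by omega)
            · show c n ∈ _
              exact hG

lemma chainG {f g : ℝ → ℝ} {K : Set ℝ} (hA : MemA f g) (hSo : So f g)
    (hK : IsMinimalSet f g K) :
    ∀ w : List Bool, ∀ y : ℝ, y ∈ K → y ∈ unitI → f 1 < y → word f g w y ≤ f 1 →
      ∃ n : ℕ, ∃ c : ℕ → ℝ, c 0 = word f g w y ∧ (∀ i < n, f (c (i + 1)) = c i) ∧
        (∀ i ≤ n, c i ∈ K ∧ c i ∈ unitI) ∧ c n ∈ Fint f 1 := by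
  have hmf := f_strictMono hA
  have hmg := g_strictMono hA
  intro w
  induction w with
  | nil =>
      intro y _ _ hy hge
      simp only [word, id] at hge
      linarith
  | cons b t ih =>
      intro y hyK hyI hy hge
      set z' := word f g t y with hz'
      have hz'I : z' ∈ unitI := word_maps hA t y hyI
      have hz'K : z' ∈ K := word_mem_K hK t hyK
      have hzK : word f g (b :: t) y ∈ K := word_mem_K hK _ hyK
      have hzI : word f g (b :: t) y ∈ unitI := word_maps hA _ y hyI
      by_cases hz : word f g (b :: t) y ∈ Fint f 1
      · exact ⟨0, fun _ => word f g (b :: t) y, rfl,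
          fun i hi => absurd hi (Nat.not_lt_zero i), fun i _ => ⟨hzK, hzI⟩, hz⟩
      · have hz2 : word f g (b :: t) y < f (f 1) := by
          by_contra hle
          push_neg at hle
          exact hz (mem_Fint1.mpr ⟨hle, hge⟩)
        cases b with
        | false =>
            exfalso
            have hwt : word f g (false :: t) y = g z' := by rw [hz']; rfl
            rw [hwt] at hz2
            have hle : g 0 ≤ g z' := hmg.monotoneOn zero_mem_unitI hz'I hz'I.1
            have := hSo.1
            linarith
        | true =>
            have hwt : word f g (true :: t) y = f z' := by rw [hz']; rfl
            rw [hwt] at hz2 hzK hzI ⊢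
            have hz'f : z' ≤ f 1 := by
              by_contra hlt
              push_neg at hlt
              have : f (f 1) < f z' := hmf (f1_mem_unitI hA) hz'I hlt
              linarith
            have hz'f' : word f g t y ≤ f 1 := by rw [← hz']; exact hz'f
            obtain ⟨n, c, hc0, hstep, hmem, hG⟩ := ih y hyK hyI hy hz'f'
            refine ⟨n + 1, fun i => Nat.rec (motive := fun _ => ℝ) (f z') (fun j _ => c j) i,
              rfl, ?_, ?_, ?_⟩
            · intro i hi
              cases i with
              | zero =>
                  show f (c 0) = f z'
                  rw [hc0, ← hz']
              | succ j =>
                  show f (c (j + 1)) = c j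
                  exact hstep j (by omega)
            · intro i hi
              cases i with
              | zero => exact ⟨hzK, hzI⟩
              | succ j => exact hmem j (by omega)
            · show c n ∈ _
              exact hG

lemma calF_mem_K {f g : ℝ → ℝ} {K : Set ℝ} (hA : MemA f g) (hSo : So f g)
    (hK : IsMinimalSet f g K) {y : ℝ} {w : List Bool} (hw : w ≠ [])
    (hyK : y ∈ K) (hyI : y ∈ unitI) (hyg : y < g 0)
    (hlo : f (f 1) ≤ word f g w y) (hhi : word f g w y < g 0) :
    calF f g (word f g w y) ∈ K := by
  have hmf := f_strictMono hA
  have hmg := g_strictMono hA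
  obtain ⟨b, t, rfl⟩ : ∃ b t, w = b :: t := by
    cases w with
    | nil => exact absurd rfl hw
    | cons b t => exact ⟨b, t, rfl⟩
  set z' := word f g t y with hz'
  have hz'I : z' ∈ unitI := word_maps hA t y hyI
  have hz'K : z' ∈ K := word_mem_K hK t hyK
  cases b with
  | false =>
      exfalso
      have hwt : word f g (false :: t) y = g z' := by rw [hz']; rfl
      rw [hwt] at hhi
      have : g 0 ≤ g z' := hmg.monotoneOn zero_mem_unitI hz'I hz'I.1
      linarith
  | true =>
      have hwt : word f g (true :: t) y = f z' := by rw [hz']; rfl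
      rw [hwt] at hlo hhi ⊢
      have hz'f1 : f 1 ≤ z' := by
        by_contra h
        push_neg at h
        have : f z' < f (f 1) := hmf hz'I (f1_mem_unitI hA) h
        linarith
      have hz'g0 : g 0 ≤ word f g t y := by
        rw [← hz']; linarith [hA.g0_lt_f1]
      obtain ⟨n, c, hc0, hstep, hmem, hG⟩ := chainF hA hSo hK t y hyK hyI hyg hz'g0
      have hinvf : Function.invFunOn f unitI (f z') = z' :=
        invFunOn_eq_self hA.f_inj hz'I rfl
      have hiter := invFunOn_iterate hA.g_inj hstep (fun i hi => (hmem i hi).2)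
      have hc0' : c 0 = z' := by rw [hc0, ← hz']
      have hnS : n ∈ {m : ℕ | (Function.invFunOn g unitI)^[m]
          (Function.invFunOn f unitI (f z')) ∈ Gint g 1} := by
        show (Function.invFunOn g unitI)^[n] (Function.invFunOn f unitI (f z')) ∈ Gint g 1
        rw [hinvf, ← hc0', hiter n le_rfl]
        exact hG
      have hNle : sInf {m : ℕ | (Function.invFunOn g unitI)^[m]
          (Function.invFunOn f unitI (f z')) ∈ Gint g 1} ≤ n := Nat.sInf_le hnS
      rw [hinvf, ← hc0'] at hNle
      have hcal : calF f g (f z') = c (sInf {m : ℕ | (Function.invFunOn g unitI)^[m]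
          (c 0) ∈ Gint g 1}) := by
        rw [calF, hinvf, ← hc0']
        exact hiter _ hNle
      rw [hcal]
      exact (hmem _ hNle).1

lemma calG_mem_K {f g : ℝ → ℝ} {K : Set ℝ} (hA : MemA f g) (hSo : So f g)
    (hK : IsMinimalSet f g K) {y : ℝ} {w : List Bool} (hw : w ≠ [])
    (hyK : y ∈ K) (hyI : y ∈ unitI) (hyg : f 1 < y)
    (hlo : f 1 < word f g w y) (hhi : word f g w y ≤ g (g 0)) :
    calG f g (word f g w y) ∈ K := by
  have hmf := f_strictMono hA
  have hmg := g_strictMono hA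
  obtain ⟨b, t, rfl⟩ : ∃ b t, w = b :: t := by
    cases w with
    | nil => exact absurd rfl hw
    | cons b t => exact ⟨b, t, rfl⟩
  set z' := word f g t y with hz'
  have hz'I : z' ∈ unitI := word_maps hA t y hyI
  have hz'K : z' ∈ K := word_mem_K hK t hyK
  cases b with
  | true =>
      exfalso
      have hwt : word f g (true :: t) y = f z' := by rw [hz']; rfl
      rw [hwt] at hlo
      have : f z' ≤ f 1 := hmf.monotoneOn hz'I one_mem_unitI hz'I.2
      linarith
  | false =>
      have hwt : word f g (false :: t) y = g z' := by rw [hz']; rfl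
      rw [hwt] at hlo hhi ⊢
      have hz'g0 : z' ≤ g 0 := by
        by_contra h
        push_neg at h
        have : g (g 0) < g z' := hmg (g0_mem_unitI hA) hz'I h
        linarith
      have hz'f1 : word f g t y ≤ f 1 := by
        rw [← hz']; linarith [hA.g0_lt_f1]
      obtain ⟨n, c, hc0, hstep, hmem, hG⟩ := chainG hA hSo hK t y hyK hyI hyg hz'f1
      have hinvg : Function.invFunOn g unitI (g z') = z' :=
        invFunOn_eq_self hA.g_inj hz'I rfl
      have hiter := invFunOn_iterate hA.f_inj hstep (fun i hi => (hmem i hi).2)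
      have hc0' : c 0 = z' := by rw [hc0, ← hz']
      have hnS : n ∈ {m : ℕ | (Function.invFunOn f unitI)^[m]
          (Function.invFunOn g unitI (g z')) ∈ Fint f 1} := by
        show (Function.invFunOn f unitI)^[n] (Function.invFunOn g unitI (g z')) ∈ Fint f 1
        rw [hinvg, ← hc0', hiter n le_rfl]
        exact hG
      have hNle : sInf {m : ℕ | (Function.invFunOn f unitI)^[m]
          (Function.invFunOn g unitI (g z')) ∈ Fint f 1} ≤ n := Nat.sInf_le hnS
      rw [hinvg, ← hc0'] at hNle
      have hcal : calG f g (g z') = c (sInf {m : ℕ | (Function.invFunOn f unitI)^[m]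
          (c 0) ∈ Fint f 1}) := by
        rw [calG, hinvg, ← hc0']
        exact hiter _ hNle
      rw [hcal]
      exact (hmem _ hNle).1

/-- for `(f,g) ∈ 𝒞` with minimal set `K` and a nonempty open interval
`J ⊆ I` meeting `K`: if `J ⊆ int (F₁ \ W)` then `𝓕(J)` meets `K`, and if
`J ⊆ int (G₁ \ W)` then `𝓖(J)` meets `K`. -/
theorem image_meets_minimal_set (f g : ℝ → ℝ) (Hf Hg K J : Set ℝ)
    (hC : MemC f g Hf Hg) (hK : IsMinimalSet f g K)
    (hJ : IsOpenInterval J) (hJI : J ⊆ unitI) (hJK : (J ∩ K).Nonempty) :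
    (J ⊆ interior (Fint f 1 \ ovW f g) → ((calF f g '' J) ∩ K).Nonempty) ∧
    (J ⊆ interior (Gint g 1 \ ovW f g) → ((calG f g '' J) ∩ K).Nonempty) := by
  obtain ⟨hA, hSo, hHo, hEe, hCa⟩ := hC
  obtain ⟨x, hxJ, hxK⟩ := hJK
  have hopen : IsOpen J := by
    obtain ⟨a, b, -, rfl⟩ := hJ
    exact isOpen_Ioo
  have hxcl : x ∈ closure (orbitP f g x) := by
    rw [hK.2.2 x hxK]; exact hxK
  obtain ⟨y', hy'J, hy'O⟩ := (mem_closure_iff.mp hxcl) J hopen hxJ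
  obtain ⟨w, hwne, hwy⟩ := hy'O
  subst hwy
  have hxI : x ∈ unitI := hJI hxJ
  constructor
  · intro hJF
    have hmemF : word f g w x ∈ Fint f 1 \ ovW f g := interior_subset (hJF hy'J)
    have hxF : x ∈ Fint f 1 \ ovW f g := interior_subset (hJF hxJ)
    have hlo : f (f 1) ≤ word f g w x := (mem_Fint1.mp hmemF.1).1
    have hhi : word f g w x < g 0 := by
      rcases lt_or_ge (word f g w x) (g 0) with h | h
      · exact h
      · exact absurd ⟨h, (mem_Fint1.mp hmemF.1).2⟩ hmemF.2
    have hxlt : x < g 0 := by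
      rcases lt_or_ge x (g 0) with h | h
      · exact h
      · exact absurd ⟨h, (mem_Fint1.mp hxF.1).2⟩ hxF.2
    exact ⟨calF f g (word f g w x), Set.mem_image_of_mem _ hy'J,
      calF_mem_K hA hSo hK hwne hxK hxI hxlt hlo hhi⟩
  · intro hJG
    have hmemG : word f g w x ∈ Gint g 1 \ ovW f g := interior_subset (hJG hy'J)
    have hxG : x ∈ Gint g 1 \ ovW f g := interior_subset (hJG hxJ)
    have hhi : word f g w x ≤ g (g 0) := (mem_Gint1.mp hmemG.1).2
    have hlo : f 1 < word f g w x := by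
      rcases lt_or_ge (f 1) (word f g w x) with h | h
      · exact h
      · exact absurd ⟨(mem_Gint1.mp hmemG.1).1, h⟩ hmemG.2
    have hxgt : f 1 < x := by
      rcases lt_or_ge (f 1) x with h | h
      · exact h
      · exact absurd ⟨(mem_Gint1.mp hxG.1).1, h⟩ hxG.2
    exact ⟨calG f g (word f g w x), Set.mem_image_of_mem _ hy'J,
      calG_mem_K hA hSo hK hwne hxK hxI hxgt hlo hhi⟩


end IFSPaper
end
end

section
/- Let (f,g) ∈ 𝒞 with unique minimal set K. If J is a nonempty open interval with J ⊆ int(R_f ∩ R_g), then J ∩ K = ∅. -/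
open Set Function MeasureTheory

noncomputable section

namespace IFSPaper

/-- for `(f,g) ∈ 𝒞` with minimal set `K`, any nonempty open interval
`J ⊆ int (R_f ∩ R_g)` is disjoint from `K`. -/
theorem interval_in_double_ruination_misses_K (f g : ℝ → ℝ) (Hf Hg K J : Set ℝ)
    (hC : MemC f g Hf Hg) (hK : IsMinimalSet f g K)
    (hJ : IsOpenInterval J) (hJR : J ⊆ interior (Rf f g Hg ∩ Rg f g Hf)) :
    J ∩ K = ∅ := by
  obtain ⟨hA, hSo, hHo, _, _⟩ := hC
  -- basic points of the unit interval
  have h0I : (0:ℝ) ∈ unitI := ⟨le_refl 0, zero_le_one⟩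
  have h1I : (1:ℝ) ∈ unitI := ⟨zero_le_one, le_refl 1⟩
  have hf1I : f 1 ∈ unitI := hA.f_maps h1I
  have hg0I : g 0 ∈ unitI := hA.g_maps h0I
  have hff1I : f (f 1) ∈ unitI := hA.f_maps hf1I
  have hgg0I : g (g 0) ∈ unitI := hA.g_maps hg0I
  have hg0f1 : g 0 < f 1 := hA.g0_lt_f1
  have hff1g0 : f (f 1) < g 0 := hSo.1
  have hf1gg0 : f 1 < g (g 0) := hSo.2
  -- monotonicity of f and g on unitI
  have hfmono : StrictMonoOn f unitI := by
    have := ContinuousOn.strictMonoOn_of_injOn_Icc (f := f) zero_le_one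
      (by rw [hA.f_zero]; exact hf1I.1) (hA.f_c1.continuous.continuousOn) hA.f_inj
    exact this
  have hgmono : StrictMonoOn g unitI := by
    have := ContinuousOn.strictMonoOn_of_injOn_Icc (f := g) zero_le_one
      (by rw [hA.g_one]; exact hg0I.2) (hA.g_c1.continuous.continuousOn) hA.g_inj
    exact this
  have hfm : MonotoneOn f unitI := hfmono.monotoneOn
  have hgm : MonotoneOn g unitI := hgmono.monotoneOn
  -- concrete descriptions of the intervals
  have hFint : Fint f 1 = Set.Icc (f (f 1)) (f 1) := by
    unfold Fint
    rw [Function.iterate_one, show (1+1 : ℕ) = 2 from rfl,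
      Function.iterate_succ_apply', Function.iterate_one]
  have hGint : Gint g 1 = Set.Icc (g 0) (g (g 0)) := by
    unfold Gint
    rw [Function.iterate_one, show (1+1 : ℕ) = 2 from rfl,
      Function.iterate_succ_apply', Function.iterate_one]
  -- hole facts
  have hHfW : ∀ u ∈ Hf, u < g 0 ∧ u ∉ ovW f g ∧ u ∈ unitI := by
    intro u hu
    have h1 : u ∈ Fint f 1 \ ovW f g := interior_subset (hHo.2.2.1 hu)
    rw [hFint] at h1
    have hu1 : u ∈ unitI := ⟨le_trans hff1I.1 h1.1.1, le_trans h1.1.2 hf1I.2⟩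
    have hlt : u < g 0 := by
      by_contra h
      exact h1.2 ⟨not_lt.1 h, h1.1.2⟩
    exact ⟨hlt, h1.2, hu1⟩
  have hHgW : ∀ u ∈ Hg, f 1 < u ∧ u ∉ ovW f g ∧ u ∈ unitI := by
    intro u hu
    have h1 : u ∈ Gint g 1 \ ovW f g := interior_subset (hHo.2.2.2.1 hu)
    rw [hGint] at h1
    have hu1 : u ∈ unitI := ⟨le_trans hg0I.1 h1.1.1, le_trans h1.1.2 hgg0I.2⟩
    have hlt : f 1 < u := by
      by_contra h
      exact h1.2 ⟨h1.1.1, not_lt.1 h⟩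
    exact ⟨hlt, h1.2, hu1⟩
  -- words map unitI into unitI
  have hwmap : ∀ (w : List Bool), ∀ z ∈ unitI, word f g w z ∈ unitI := by
    intro w
    induction w with
    | nil => intro z hz; simpa [word] using hz
    | cons b t ih =>
      intro z hz
      cases b with
      | true =>
        show f (word f g t z) ∈ unitI
        exact hA.f_maps (ih z hz)
      | false =>
        show g (word f g t z) ∈ unitI
        exact hA.g_maps (ih z hz)
  -- left inverses
  have hfinv : ∀ z ∈ unitI, Function.invFunOn f unitI (f z) = z :=
    fun z hz => hA.f_inj.leftInvOn_invFunOn hz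
  have hginv : ∀ z ∈ unitI, Function.invFunOn g unitI (g z) = z :=
    fun z hz => hA.g_inj.leftInvOn_invFunOn hz
  -- once the backward orbit is in the holes, it stays there
  have aux1 : ∀ (w : List Bool), ∀ z ∈ unitI, word f g w z ∈ Hf ∪ Hg → z ∈ Hf ∪ Hg := by
    intro w
    induction w with
    | nil => intro z hz h; simpa [word] using h
    | cons b t ih =>
      intro z hz h
      have hzt : word f g t z ∈ unitI := hwmap t z hz
      cases b with
      | true =>
        have hval : f (word f g t z) ∈ Hf ∪ Hg := h
        rcases hval with hHfm | hHgm
        · -- f (word t z) ∈ Hf = f '' Hg, so word t z ∈ Hg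
          rw [← hHo.2.2.2.2.2] at hHfm
          obtain ⟨u, huHg, hu⟩ := hHfm
          have hu1 : u ∈ unitI := (hHgW u huHg).2.2
          have : u = word f g t z := hA.f_inj hu1 hzt hu
          exact ih z hz (Or.inr (this ▸ huHg))
        · -- f (word t z) ∈ Hg is impossible: f (word t z) ≤ f 1 < Hg
          exfalso
          have h1 : f 1 < f (word f g t z) := (hHgW _ hHgm).1
          have h2 : f (word f g t z) ≤ f 1 := hfm hzt h1I hzt.2
          linarith
      | false =>
        have hval : g (word f g t z) ∈ Hf ∪ Hg := h
        rcases hval with hHfm | hHgm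
        · exfalso
          have h1 : g (word f g t z) < g 0 := (hHfW _ hHfm).1
          have h2 : g 0 ≤ g (word f g t z) := hgm h0I hzt hzt.1
          linarith
        · rw [← hHo.2.2.2.2.1] at hHgm
          obtain ⟨u, huHf, hu⟩ := hHgm
          have hu1 : u ∈ unitI := (hHfW u huHf).2.2
          have : u = word f g t z := hA.g_inj hu1 hzt hu
          exact ih z hz (Or.inl (this ▸ huHf))
  -- now the main argument
  rw [Set.eq_empty_iff_forall_notMem]
  rintro x ⟨hxJ, hxK⟩
  have hxRR : x ∈ Rf f g Hg ∩ Rg f g Hf := interior_subset (hJR hxJ)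
  have hxI : x ∈ unitI := hK.2.1 hxK
  have hxW : x ∈ ovW f g := by
    have h1 : x ∈ Fint f 1 := hxRR.1.1.1
    have h2 : x ∈ Gint g 1 := hxRR.2.1.1
    rw [hFint] at h1; rw [hGint] at h2
    exact ⟨h2.1, h1.2⟩
  -- the orbit of x returns to J
  have hKcl : closure (orbitP f g x) = K := hK.2.2 x hxK
  have hxcl : x ∈ closure (orbitP f g x) := by rw [hKcl]; exact hxK
  have hJopen : IsOpen J := by
    obtain ⟨a, b, hab, rfl⟩ := hJ
    exact isOpen_Ioo
  obtain ⟨y, hyJ, hyorb⟩ := (mem_closure_iff.1 hxcl) J hJopen hxJ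
  obtain ⟨w, hwne, hwx⟩ := hyorb
  have hyRR : y ∈ Rf f g Hg ∩ Rg f g Hf := interior_subset (hJR hyJ)
  have hyRf : calF f g y ∈ Hg := hyRR.1.2
  have hyRg : calG f g y ∈ Hf := hyRR.2.2
  have hyW : y ∈ ovW f g := by
    have h1 : y ∈ Fint f 1 := hyRR.1.1.1
    have h2 : y ∈ Gint g 1 := hyRR.2.1.1
    rw [hFint] at h1; rw [hGint] at h2
    exact ⟨h2.1, h1.2⟩
  -- backward orbit for the f-branch
  set Z : ℕ → ℝ := fun n =>
    (Function.invFunOn g unitI)^[n] (Function.invFunOn f unitI y) with hZdef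
  set N : ℕ := sInf {n : ℕ | Z n ∈ Gint g 1} with hNdef
  have hZN : Z N ∈ Hg := hyRf
  have haux2 : ∀ (w : List Bool), ∀ z ∈ unitI, ∀ j : ℕ, word f g w z = Z j →
      j ≤ N → g 0 < Z j → z ∉ ovW f g := by
    intro w
    induction w with
    | nil =>
      intro z hz j hzw hjN hgz
      have hzZ : z = Z j := by simpa [word] using hzw
      rcases lt_or_eq_of_le hjN with hlt | heq
      · have hnotin : Z j ∉ Gint g 1 := Nat.notMem_of_lt_sInf (hNdef ▸ hlt)
        rw [hGint] at hnotin
        have hZgg : g (g 0) < Z j := by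
          by_contra h
          exact hnotin ⟨le_of_lt hgz, not_lt.1 h⟩
        intro hW
        rw [hzZ] at hW
        have : Z j ≤ f 1 := hW.2
        linarith
      · rw [heq] at hzZ
        rw [hzZ]
        exact (hHgW _ hZN).2.1
    | cons b t ih =>
      intro z hz j hzw hjN hgz
      have hzt : word f g t z ∈ unitI := hwmap t z hz
      rcases lt_or_eq_of_le hjN with hlt | heq
      · have hnotin : Z j ∉ Gint g 1 := Nat.notMem_of_lt_sInf (hNdef ▸ hlt)
        rw [hGint] at hnotin
        have hZgg : g (g 0) < Z j := by
          by_contra h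
          exact hnotin ⟨le_of_lt hgz, not_lt.1 h⟩
        cases b with
        | true =>
          exfalso
          have hfw : f (word f g t z) = Z j := hzw
          have h2 : f (word f g t z) ≤ f 1 := hfm hzt h1I hzt.2
          linarith
        | false =>
          have hgw : g (word f g t z) = Z j := hzw
          have hz' : g 0 < word f g t z := by
            by_contra h
            have : g (word f g t z) ≤ g (g 0) := hgm hzt hg0I (not_lt.1 h)
            linarith
          have hZsucc : Z (j+1) = word f g t z := by
            rw [hZdef]
            show (Function.invFunOn g unitI)^[j+1] (Function.invFunOn f unitI y) = _
            rw [Function.iterate_succ_apply']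
            have : (Function.invFunOn g unitI)^[j] (Function.invFunOn f unitI y) = Z j := by
              rw [hZdef]
            rw [this, ← hgw]
            exact hginv _ hzt
          exact ih z hz (j+1) hZsucc.symm (Nat.succ_le_of_lt hlt) (hZsucc ▸ hz')
      · -- j = N : we are in the hole
        have hwhole : word f g (b :: t) z ∈ Hf ∪ Hg := by
          rw [hzw, heq]; exact Or.inr hZN
        rcases aux1 (b :: t) z hz hwhole with h | h
        · exact (hHfW _ h).2.1
        · exact (hHgW _ h).2.1
  -- backward orbit for the g-branch
  set Zg : ℕ → ℝ := fun n =>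
    (Function.invFunOn f unitI)^[n] (Function.invFunOn g unitI y) with hZgdef
  set M : ℕ := sInf {n : ℕ | Zg n ∈ Fint f 1} with hMdef
  have hZgM : Zg M ∈ Hf := hyRg
  have haux3 : ∀ (w : List Bool), ∀ z ∈ unitI, ∀ j : ℕ, word f g w z = Zg j →
      j ≤ M → Zg j < f 1 → z ∉ ovW f g := by
    intro w
    induction w with
    | nil =>
      intro z hz j hzw hjM hfz
      have hzZ : z = Zg j := by simpa [word] using hzw
      rcases lt_or_eq_of_le hjM with hlt | heq
      · have hnotin : Zg j ∉ Fint f 1 := Nat.notMem_of_lt_sInf (hMdef ▸ hlt)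
        rw [hFint] at hnotin
        have hZff : Zg j < f (f 1) := by
          by_contra h
          exact hnotin ⟨not_lt.1 h, le_of_lt hfz⟩
        intro hW
        rw [hzZ] at hW
        have : g 0 ≤ Zg j := hW.1
        linarith
      · rw [heq] at hzZ
        rw [hzZ]
        exact (hHfW _ hZgM).2.1
    | cons b t ih =>
      intro z hz j hzw hjM hfz
      have hzt : word f g t z ∈ unitI := hwmap t z hz
      rcases lt_or_eq_of_le hjM with hlt | heq
      · have hnotin : Zg j ∉ Fint f 1 := Nat.notMem_of_lt_sInf (hMdef ▸ hlt)
        rw [hFint] at hnotin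
        have hZff : Zg j < f (f 1) := by
          by_contra h
          exact hnotin ⟨not_lt.1 h, le_of_lt hfz⟩
        cases b with
        | false =>
          exfalso
          have hgw : g (word f g t z) = Zg j := hzw
          have h2 : g 0 ≤ g (word f g t z) := hgm h0I hzt hzt.1
          linarith
        | true =>
          have hfw : f (word f g t z) = Zg j := hzw
          have hz' : word f g t z < f 1 := by
            by_contra h
            have : f (f 1) ≤ f (word f g t z) := hfm hf1I hzt (not_lt.1 h)
            linarith
          have hZsucc : Zg (j+1) = word f g t z := by
            rw [hZgdef]
            show (Function.invFunOn f unitI)^[j+1] (Function.invFunOn g unitI y) = _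
            rw [Function.iterate_succ_apply']
            have : (Function.invFunOn f unitI)^[j] (Function.invFunOn g unitI y) = Zg j := by
              rw [hZgdef]
            rw [this, ← hfw]
            exact hfinv _ hzt
          exact ih z hz (j+1) hZsucc.symm (Nat.succ_le_of_lt hlt) (hZsucc ▸ hz')
      · have hwhole : word f g (b :: t) z ∈ Hf ∪ Hg := by
          rw [hzw, heq]; exact Or.inl hZgM
        rcases aux1 (b :: t) z hz hwhole with h | h
        · exact (hHfW _ h).2.1
        · exact (hHgW _ h).2.1
  -- peel the first letter of w
  obtain ⟨b, t, rfl⟩ := List.exists_cons_of_ne_nil hwne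
  have hzt : word f g t x ∈ unitI := hwmap t x hxI
  cases b with
  | true =>
    have hfw : f (word f g t x) = y := hwx
    have hZ0 : Z 0 = word f g t x := by
      rw [hZdef]
      show Function.invFunOn f unitI y = _
      rw [← hfw]
      exact hfinv _ hzt
    have hz' : f 1 < word f g t x := by
      by_contra h
      have : f (word f g t x) ≤ f (f 1) := hfm hzt hf1I (not_lt.1 h)
      have hy1 : g 0 ≤ y := hyW.1
      linarith
    have : g 0 < Z 0 := by rw [hZ0]; linarith
    exact haux2 t x hxI 0 hZ0.symm (Nat.zero_le N) this hxW
  | false =>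
    have hgw : g (word f g t x) = y := hwx
    have hZg0 : Zg 0 = word f g t x := by
      rw [hZgdef]
      show Function.invFunOn g unitI y = _
      rw [← hgw]
      exact hginv _ hzt
    have hz' : word f g t x < g 0 := by
      by_contra h
      have : g (g 0) ≤ g (word f g t x) := hgm hg0I hzt (not_lt.1 h)
      have hy1 : y ≤ f 1 := hyW.2
      linarith
    have : Zg 0 < f 1 := by rw [hZg0]; linarith
    exact haux3 t x hxI 0 hZg0.symm (Nat.zero_le M) this hxW

end IFSPaper
end
end

section
/- Fix ε∈(0,1/6) and λ∈(0,1/2), and set I₋₁:=[0,1/3−ε], I₀:=[1/3+ε,2/3−ε], I₁:=[2/3+ε,1]. Let (f,g) ∈ 𝒜 satisfy the inclusion property: f(I₋₁)⊆I₋₁, f(I₀)⊆int(I₋₁), f(I₁)⊆int(I₀), g(I₁)⊆I₁, g(I₀)⊆int(I₁), g(I₋₁)⊆int(I₀); and the strong uniform contraction property: f′(x)<λ and g′(x)<λ for all x∈I₋₁∪I₀∪I₁. Then the unique minimal set K of ⟨f,g⟩₊ is homeomorphic to the Cantor set (equivalently, K is nonempty, compact, perfect and totally disconnected). -/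
open Set Function MeasureTheory

noncomputable section

namespace IFSPaper

/-! ### Auxiliary lemmas about words -/

lemma word_nil' (f g : ℝ → ℝ) (x : ℝ) : word f g [] x = x := rfl

lemma word_cons (f g : ℝ → ℝ) (b : Bool) (t : List Bool) (x : ℝ) :
    word f g (b :: t) x = (if b then f else g) (word f g t x) := rfl

lemma word_append (f g : ℝ → ℝ) (u v : List Bool) (x : ℝ) :
    word f g (u ++ v) x = word f g u (word f g v x) := by
  induction u with
  | nil => rfl
  | cons b t ih => simp [word_cons, ih, List.cons_append]

lemma word_replicate_true (f g : ℝ → ℝ) (n : ℕ) (x : ℝ) :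
    word f g (List.replicate n true) x = f^[n] x := by
  induction n with
  | zero => rfl
  | succ n ih => simp [List.replicate_succ, word_cons, ih, Function.iterate_succ_apply']

lemma word_replicate_false (f g : ℝ → ℝ) (n : ℕ) (x : ℝ) :
    word f g (List.replicate n false) x = g^[n] x := by
  induction n with
  | zero => rfl
  | succ n ih => simp [List.replicate_succ, word_cons, ih, Function.iterate_succ_apply']

lemma word_continuous {f g : ℝ → ℝ} (hf : Continuous f) (hg : Continuous g) (w : List Bool) :
    Continuous (word f g w) := by
  induction w with
  | nil => exact continuous_id
  | cons b t ih =>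
    have : Continuous (if b then f else g) := by cases b <;> simpa
    exact this.comp ih

lemma word_mapsTo {f g : ℝ → ℝ} {S : Set ℝ} (hf : MapsTo f S S) (hg : MapsTo g S S)
    (w : List Bool) : MapsTo (word f g w) S S := by
  induction w with
  | nil => exact mapsTo_id S
  | cons b t ih =>
    intro x hx
    have h1 := ih hx
    rw [word_cons]
    cases b <;> simp <;> [exact hg h1; exact hf h1]

lemma word_injOn {f g : ℝ → ℝ} {S : Set ℝ} (hfm : MapsTo f S S) (hgm : MapsTo g S S)
    (hf : InjOn f S) (hg : InjOn g S) (w : List Bool) : InjOn (word f g w) S := by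
  induction w with
  | nil => exact injOn_id S
  | cons b t ih =>
    intro x hx y hy hxy
    rw [word_cons, word_cons] at hxy
    have h1 := word_mapsTo hfm hgm t hx
    have h2 := word_mapsTo hfm hgm t hy
    refine ih hx hy ?_
    cases b
    · exact hg h1 h2 (by simpa using hxy)
    · exact hf h1 h2 (by simpa using hxy)

lemma word_monoOn {f g : ℝ → ℝ} {S : Set ℝ} (hfm : MapsTo f S S) (hgm : MapsTo g S S)
    (hf : MonotoneOn f S) (hg : MonotoneOn g S) (w : List Bool) : MonotoneOn (word f g w) S := by
  induction w with
  | nil => exact monotoneOn_id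
  | cons b t ih =>
    intro x hx y hy hxy
    rw [word_cons, word_cons]
    have h1 := word_mapsTo hfm hgm t hx
    have h2 := word_mapsTo hfm hgm t hy
    have h3 := ih hx hy hxy
    cases b
    · simpa using hg h1 h2 h3
    · simpa using hf h1 h2 h3

lemma exists_ofFn_eq {n : ℕ} (l : List Bool) (h : l.length = n) :
    ∃ c : Fin n → Bool, List.ofFn c = l := by
  subst h
  exact ⟨l.get, List.ofFn_get l⟩


/-- appendix example: under the inclusion property and the strong uniform
contraction property, the unique minimal set `K` is homeomorphic to the Cantor set,
i.e. `K` is nonempty, compact, perfect and totally disconnected. -/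
theorem appendix_minimal_set_is_cantor (ε lam : ℝ)
    (hε0 : 0 < ε) (hε : ε < 1/6) (hlam0 : 0 < lam) (hlam : lam < 1/2)
    (f g : ℝ → ℝ) (K : Set ℝ) (hA : MemA f g)
    (hinc : InclusionProp f g ε) (hcon : StrongContraction f g ε lam)
    (hK : IsMinimalSet f g K) :
    K.Nonempty ∧ IsCompact K ∧ Perfect K ∧ IsTotallyDisconnected K := by
  obtain ⟨⟨x₀, hx₀⟩, hKI, hmin⟩ := hK
  have hfc : Continuous f := hA.f_c1.continuous
  have hgc : Continuous g := hA.g_c1.continuous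
  have hKclosed : IsClosed K := by
    rw [← hmin x₀ hx₀]; exact isClosed_closure
  have hKcomp : IsCompact K := IsCompact.of_isClosed_subset isCompact_Icc hKclosed hKI
  have horb : ∀ x ∈ K, orbitP f g x ⊆ K := by
    intro x hx; rw [← hmin x hx]; exact subset_closure
  have h0u : (0:ℝ) ∈ unitI := ⟨le_refl _, by norm_num⟩
  have h1u : (1:ℝ) ∈ unitI := ⟨by norm_num, le_refl _⟩
  set Λ : Set ℝ := Im1 ε ∪ Iz ε ∪ Ip1 ε with hΛdef
  have hIm1sub : Im1 ε ⊆ unitI := Set.Icc_subset_Icc le_rfl (by linarith)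
  have hIzsub : Iz ε ⊆ unitI := Set.Icc_subset_Icc (by linarith) (by linarith)
  have hIp1sub : Ip1 ε ⊆ unitI := Set.Icc_subset_Icc (by linarith) le_rfl
  have hΛu : Λ ⊆ unitI := by
    rintro x ((hx | hx) | hx)
    exacts [hIm1sub hx, hIzsub hx, hIp1sub hx]
  obtain ⟨hf1, hf2, hf3, hg1, hg2, hg3⟩ := hinc
  have hfΛ : MapsTo f Λ Λ := by
    rintro x ((hx | hx) | hx)
    · exact Or.inl (Or.inl (hf1 (mem_image_of_mem f hx)))
    · exact Or.inl (Or.inl (interior_subset (hf2 (mem_image_of_mem f hx))))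
    · exact Or.inl (Or.inr (interior_subset (hf3 (mem_image_of_mem f hx))))
  have hgΛ : MapsTo g Λ Λ := by
    rintro x ((hx | hx) | hx)
    · exact Or.inl (Or.inr (interior_subset (hg3 (mem_image_of_mem g hx))))
    · exact Or.inr (interior_subset (hg2 (mem_image_of_mem g hx)))
    · exact Or.inr (hg1 (mem_image_of_mem g hx))
  have h0Λ : (0:ℝ) ∈ Λ := Or.inl (Or.inl ⟨le_refl _, by linarith⟩)
  have hΛclosed : IsClosed Λ :=
    (IsClosed.union isClosed_Icc isClosed_Icc).union isClosed_Icc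
  have hΛcomp : IsCompact Λ :=
    (IsCompact.union isCompact_Icc isCompact_Icc).union isCompact_Icc
  -- monotonicity
  have hf01 : f 0 ≤ f 1 := by
    rw [hA.f_zero]; linarith [hA.g0_pos, hA.g0_lt_f1]
  have hfmono : StrictMonoOn f unitI :=
    ContinuousOn.strictMonoOn_of_injOn_Icc (by norm_num) hf01 hfc.continuousOn hA.f_inj
  have hg01 : g 0 ≤ g 1 := by
    rw [hA.g_one]; linarith [hA.g0_lt_f1, hA.f1_lt_one]
  have hgmono : StrictMonoOn g unitI :=
    ContinuousOn.strictMonoOn_of_injOn_Icc (by norm_num) hg01 hgc.continuousOn hA.g_inj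
  -- 0 ∈ K
  have hfle : ∀ x ∈ unitI, f x ≤ x := by
    intro x hx
    rcases eq_or_lt_of_le hx.1 with h0 | h0
    · rw [← h0, hA.f_zero]
    rcases eq_or_lt_of_le hx.2 with h1 | h1
    · rw [h1]; exact hA.f1_lt_one.le
    · exact (hA.f_lt_id x ⟨h0, h1⟩).le
  have hamem : ∀ n, f^[n] x₀ ∈ unitI := by
    intro n; induction n with
    | zero => exact hKI hx₀
    | succ n ih => rw [Function.iterate_succ_apply']; exact hA.f_maps ih
  have hanti : Antitone fun n => f^[n] x₀ := by
    apply antitone_nat_of_succ_le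
    intro n
    show f^[n+1] x₀ ≤ f^[n] x₀
    rw [Function.iterate_succ_apply']; exact hfle _ (hamem n)
  have hbdd : BddBelow (Set.range fun n => f^[n] x₀) :=
    ⟨0, by rintro y ⟨n, rfl⟩; exact (hamem n).1⟩
  have hten := tendsto_atTop_ciInf hanti hbdd
  set L := ⨅ n, f^[n] x₀ with hLdef
  have hLu : L ∈ unitI :=
    isClosed_Icc.mem_of_tendsto hten (Filter.Eventually.of_forall hamem)
  have hfL : f L = L := by
    have h1 : Filter.Tendsto (fun n => f^[n+1] x₀) Filter.atTop (nhds L) :=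
      hten.comp (Filter.tendsto_add_atTop_nat 1)
    have h2 : Filter.Tendsto (fun n => f (f^[n] x₀)) Filter.atTop (nhds (f L)) :=
      (hfc.tendsto L).comp hten
    have heq : (fun n => f (f^[n] x₀)) = fun n => f^[n+1] x₀ := by
      funext n; rw [Function.iterate_succ_apply']
    rw [heq] at h2
    exact tendsto_nhds_unique h2 h1
  have hL0 : L = 0 := by
    by_contra hne
    have hL0' : 0 < L := lt_of_le_of_ne hLu.1 (Ne.symm hne)
    rcases eq_or_lt_of_le hLu.2 with h1 | h1
    · rw [h1] at hfL; exact absurd hfL (ne_of_lt hA.f1_lt_one)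
    · exact absurd hfL (ne_of_lt (hA.f_lt_id L ⟨hL0', h1⟩))
  have h0K : (0:ℝ) ∈ K := by
    apply hKclosed.mem_of_tendsto (hL0 ▸ hten.comp (Filter.tendsto_add_atTop_nat 1))
    exact Filter.Eventually.of_forall fun n =>
      horb x₀ hx₀ ⟨List.replicate (n+1) true, by simp, word_replicate_true f g (n+1) x₀⟩
  -- K ⊆ Λ
  have hKΛ : K ⊆ Λ := by
    rw [← hmin 0 h0K]
    refine closure_minimal ?_ hΛclosed
    rintro y ⟨w, -, rfl⟩
    exact word_mapsTo hfΛ hgΛ w h0Λ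
  -- K infinite
  have hgIoo : ∀ n, g^[n+1] 0 ∈ Set.Ioo (0:ℝ) 1 := by
    intro n; induction n with
    | zero =>
      simp only [zero_add, Function.iterate_one]
      exact ⟨hA.g0_pos, lt_trans hA.g0_lt_f1 hA.f1_lt_one⟩
    | succ n ih =>
      rw [Function.iterate_succ_apply']
      have hxu : g^[n+1] 0 ∈ unitI := ⟨ih.1.le, ih.2.le⟩
      have hgx : g^[n+1] 0 < g (g^[n+1] 0) := hA.id_lt_g _ ih
      refine ⟨lt_trans ih.1 hgx, ?_⟩
      rcases eq_or_lt_of_le (hA.g_maps hxu).2 with h | h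
      · exact absurd (hA.g_inj hxu h1u (h.trans hA.g_one.symm)) (ne_of_lt ih.2)
      · exact h
  have hKinf : K.Infinite := by
    have hsm : StrictMono fun n => g^[n+1] 0 := by
      apply strictMono_nat_of_lt_succ
      intro n
      show g^[n+1] 0 < g^[n+1+1] 0
      rw [Function.iterate_succ_apply' g (n+1)]
      exact hA.id_lt_g _ (hgIoo n)
    exact Set.infinite_of_injective_forall_mem hsm.injective fun n =>
      horb 0 h0K ⟨List.replicate (n+1) false, by simp, word_replicate_false f g (n+1) 0⟩
  -- Perfect
  have hperfect : Perfect K := by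
    refine ⟨hKclosed, ?_⟩
    intro y hy
    rw [accPt_iff_nhds]
    by_contra hcp
    push_neg at hcp
    obtain ⟨U, hU, hUy⟩ := hcp
    obtain ⟨U', hU'U, hU'o, hyU'⟩ := mem_nhds_iff.mp hU
    have hiso : ∀ z ∈ K, ∃ V : Set ℝ, IsOpen V ∧ z ∈ V ∧ ∀ z' ∈ V ∩ K, z' = z := by
      intro z hz
      by_cases hzy : z = y
      · subst hzy
        exact ⟨U', hU'o, hyU', fun z' hz' => hUy z' ⟨hU'U hz'.1, hz'.2⟩⟩
      · have hyc : y ∈ closure (orbitP f g z) := by rw [hmin z hz]; exact hy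
        obtain ⟨p, hpU', ⟨w, hwne, hwp⟩⟩ := mem_closure_iff.mp hyc U' hU'o hyU'
        have hpK : p ∈ K := horb z hz ⟨w, hwne, hwp⟩
        have hpy : p = y := hUy p ⟨hU'U hpU', hpK⟩
        refine ⟨word f g w ⁻¹' U', hU'o.preimage (word_continuous hfc hgc w), ?_, ?_⟩
        · show word f g w z ∈ U'
          rw [hwp]; exact hpU'
        · intro z' hz'
          have h1 : word f g w z' ∈ K := horb z' hz'.2 ⟨w, hwne, rfl⟩
          have h2 : word f g w z' = y := hUy _ ⟨hU'U hz'.1, h1⟩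
          have h3 : word f g w z = y := hwp.trans hpy
          exact word_injOn hA.f_maps hA.g_maps hA.f_inj hA.g_inj w
            (hKI hz'.2) (hKI hz) (h2.trans h3.symm)
    have hiso' : ∀ z : ℝ, ∃ V : Set ℝ, z ∈ K → (IsOpen V ∧ z ∈ V ∧ ∀ z' ∈ V ∩ K, z' = z) := by
      intro z
      by_cases hz : z ∈ K
      · obtain ⟨V, h⟩ := hiso z hz; exact ⟨V, fun _ => h⟩
      · exact ⟨∅, fun h => absurd h hz⟩
    choose V hV using hiso'
    obtain ⟨t, htK, htc⟩ := hKcomp.elim_nhds_subcover V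
      (fun x hx => ((hV x hx).1).mem_nhds (hV x hx).2.1)
    refine hKinf (Set.Finite.subset t.finite_toSet ?_)
    intro z hz
    obtain ⟨x, hxt, hzx⟩ := Set.mem_iUnion₂.mp (htc hz)
    have hzeq := (hV x (htK x hxt)).2.2 z ⟨hzx, hz⟩
    rw [hzeq]; exact hxt
  -- contraction machinery
  have hΛP : ∀ c d : ℝ,
      (Set.Icc c d ⊆ Im1 ε ∨ Set.Icc c d ⊆ Iz ε ∨ Set.Icc c d ⊆ Ip1 ε) → Set.Icc c d ⊆ Λ := by
    intro c d h
    rcases h with h | h | h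
    · exact fun x hx => Or.inl (Or.inl (h hx))
    · exact fun x hx => Or.inl (Or.inr (h hx))
    · exact fun x hx => Or.inr (h hx)
  have hstep : ∀ h : ℝ → ℝ, ContDiff ℝ 1 h → (∀ x ∈ Λ, deriv h x < lam) →
      ∀ c d : ℝ, c ≤ d → Set.Icc c d ⊆ Λ → h d - h c ≤ lam * (d - c) := by
    intro h hc1 hd c d hcd hsub
    rcases eq_or_lt_of_le hcd with rfl | hlt
    · simp
    obtain ⟨ξ, hξ, hslope⟩ := exists_hasDerivAt_eq_slope h (deriv h) hlt
      hc1.continuous.continuousOn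
      (fun x _ => (hc1.differentiable one_ne_zero x).hasDerivAt)
    have h1 : deriv h ξ < lam := hd ξ (hsub (Set.mem_Icc_of_Ioo hξ))
    have h2 : h d - h c = deriv h ξ * (d - c) := by
      rw [hslope, div_mul_cancel₀ _ (sub_ne_zero.mpr hlt.ne')]
    rw [h2]
    exact mul_le_mul_of_nonneg_right h1.le (by linarith)
  have hfd : ∀ x ∈ Λ, deriv f x < lam := fun x hx => (hcon x hx).1
  have hgd : ∀ x ∈ Λ, deriv g x < lam := fun x hx => (hcon x hx).2
  have hPf : ∀ c d : ℝ, c ≤ d →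
      (Set.Icc c d ⊆ Im1 ε ∨ Set.Icc c d ⊆ Iz ε ∨ Set.Icc c d ⊆ Ip1 ε) →
      f c ≤ f d ∧
      (Set.Icc (f c) (f d) ⊆ Im1 ε ∨ Set.Icc (f c) (f d) ⊆ Iz ε ∨
        Set.Icc (f c) (f d) ⊆ Ip1 ε) := by
    intro c d hcd hP
    have hcm : c ∈ Set.Icc c d := Set.left_mem_Icc.mpr hcd
    have hdm : d ∈ Set.Icc c d := Set.right_mem_Icc.mpr hcd
    have hsubu : Set.Icc c d ⊆ unitI := (hΛP c d hP).trans hΛu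
    refine ⟨hfmono.monotoneOn (hsubu hcm) (hsubu hdm) hcd, ?_⟩
    rcases hP with h | h | h
    · have h1 : f c ∈ Im1 ε := hf1 (mem_image_of_mem f (h hcm))
      have h2 : f d ∈ Im1 ε := hf1 (mem_image_of_mem f (h hdm))
      exact Or.inl (Set.Icc_subset_Icc h1.1 h2.2)
    · have h1 : f c ∈ Im1 ε := interior_subset (hf2 (mem_image_of_mem f (h hcm)))
      have h2 : f d ∈ Im1 ε := interior_subset (hf2 (mem_image_of_mem f (h hdm)))
      exact Or.inl (Set.Icc_subset_Icc h1.1 h2.2)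
    · have h1 : f c ∈ Iz ε := interior_subset (hf3 (mem_image_of_mem f (h hcm)))
      have h2 : f d ∈ Iz ε := interior_subset (hf3 (mem_image_of_mem f (h hdm)))
      exact Or.inr (Or.inl (Set.Icc_subset_Icc h1.1 h2.2))
  have hPg : ∀ c d : ℝ, c ≤ d →
      (Set.Icc c d ⊆ Im1 ε ∨ Set.Icc c d ⊆ Iz ε ∨ Set.Icc c d ⊆ Ip1 ε) →
      g c ≤ g d ∧
      (Set.Icc (g c) (g d) ⊆ Im1 ε ∨ Set.Icc (g c) (g d) ⊆ Iz ε ∨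
        Set.Icc (g c) (g d) ⊆ Ip1 ε) := by
    intro c d hcd hP
    have hcm : c ∈ Set.Icc c d := Set.left_mem_Icc.mpr hcd
    have hdm : d ∈ Set.Icc c d := Set.right_mem_Icc.mpr hcd
    have hsubu : Set.Icc c d ⊆ unitI := (hΛP c d hP).trans hΛu
    refine ⟨hgmono.monotoneOn (hsubu hcm) (hsubu hdm) hcd, ?_⟩
    rcases hP with h | h | h
    · have h1 : g c ∈ Iz ε := interior_subset (hg3 (mem_image_of_mem g (h hcm)))
      have h2 : g d ∈ Iz ε := interior_subset (hg3 (mem_image_of_mem g (h hdm)))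
      exact Or.inr (Or.inl (Set.Icc_subset_Icc h1.1 h2.2))
    · have h1 : g c ∈ Ip1 ε := interior_subset (hg2 (mem_image_of_mem g (h hcm)))
      have h2 : g d ∈ Ip1 ε := interior_subset (hg2 (mem_image_of_mem g (h hdm)))
      exact Or.inr (Or.inr (Set.Icc_subset_Icc h1.1 h2.2))
    · have h1 : g c ∈ Ip1 ε := hg1 (mem_image_of_mem g (h hcm))
      have h2 : g d ∈ Ip1 ε := hg1 (mem_image_of_mem g (h hdm))
      exact Or.inr (Or.inr (Set.Icc_subset_Icc h1.1 h2.2))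
  have hkey : ∀ (v : List Bool) (c d : ℝ), c ≤ d →
      (Set.Icc c d ⊆ Im1 ε ∨ Set.Icc c d ⊆ Iz ε ∨ Set.Icc c d ⊆ Ip1 ε) →
      word f g v c ≤ word f g v d ∧
      (Set.Icc (word f g v c) (word f g v d) ⊆ Im1 ε ∨
        Set.Icc (word f g v c) (word f g v d) ⊆ Iz ε ∨
        Set.Icc (word f g v c) (word f g v d) ⊆ Ip1 ε) ∧
      word f g v d - word f g v c ≤ lam ^ v.length * (d - c) := by
    intro v
    induction v with
    | nil => intro c d hcd hP; exact ⟨hcd, hP, by simp [word_nil']⟩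
    | cons b t ih =>
      intro c d hcd hP
      obtain ⟨h1, h2, h3⟩ := ih c d hcd hP
      have hlam' : lam * (word f g t d - word f g t c)
          ≤ lam * (lam ^ t.length * (d - c)) :=
        mul_le_mul_of_nonneg_left h3 hlam0.le
      cases b
      · obtain ⟨h4, h5⟩ := hPg (word f g t c) (word f g t d) h1 h2
        have h6 := hstep g hA.g_c1 hgd (word f g t c) (word f g t d) h1 (hΛP _ _ h2)
        refine ⟨h4, h5, ?_⟩
        show g (word f g t d) - g (word f g t c) ≤ lam ^ (t.length + 1) * (d - c)
        calc g (word f g t d) - g (word f g t c)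
            ≤ lam * (word f g t d - word f g t c) := h6
          _ ≤ lam * (lam ^ t.length * (d - c)) := hlam'
          _ = lam ^ (t.length + 1) * (d - c) := by ring
      · obtain ⟨h4, h5⟩ := hPf (word f g t c) (word f g t d) h1 h2
        have h6 := hstep f hA.f_c1 hfd (word f g t c) (word f g t d) h1 (hΛP _ _ h2)
        refine ⟨h4, h5, ?_⟩
        show f (word f g t d) - f (word f g t c) ≤ lam ^ (t.length + 1) * (d - c)
        calc f (word f g t d) - f (word f g t c)
            ≤ lam * (word f g t d - word f g t c) := h6
          _ ≤ lam * (lam ^ t.length * (d - c)) := hlam'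
          _ = lam ^ (t.length + 1) * (d - c) := by ring
  have hwmono : ∀ w, MonotoneOn (word f g w) unitI := fun w =>
    word_monoOn hA.f_maps hA.g_maps hfmono.monotoneOn hgmono.monotoneOn w
  -- volume estimates
  have hvolword : ∀ v : List Bool,
      volume (word f g v '' Λ) ≤ 3 * ENNReal.ofReal (lam ^ v.length) := by
    intro v
    have himg : ∀ a b : ℝ, a ≤ b →
        (Set.Icc a b ⊆ Im1 ε ∨ Set.Icc a b ⊆ Iz ε ∨ Set.Icc a b ⊆ Ip1 ε) →
        volume (word f g v '' Set.Icc a b) ≤ ENNReal.ofReal (lam ^ v.length * (b - a)) := by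
      intro a b hab hP
      obtain ⟨h1, h2, h3⟩ := hkey v a b hab hP
      have hsubu : Set.Icc a b ⊆ unitI := (hΛP a b hP).trans hΛu
      have hsub : word f g v '' Set.Icc a b
          ⊆ Set.Icc (word f g v a) (word f g v b) := by
        rintro y ⟨x, hx, rfl⟩
        have hau := hsubu (Set.left_mem_Icc.mpr hab)
        have hbu := hsubu (Set.right_mem_Icc.mpr hab)
        have hxu := hsubu hx
        exact ⟨hwmono v hau hxu hx.1, hwmono v hxu hbu hx.2⟩
      calc volume (word f g v '' Set.Icc a b)
          ≤ volume (Set.Icc (word f g v a) (word f g v b)) := measure_mono hsub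
        _ = ENNReal.ofReal (word f g v b - word f g v a) := Real.volume_Icc
        _ ≤ ENNReal.ofReal (lam ^ v.length * (b - a)) := ENNReal.ofReal_le_ofReal h3
    have hlp : (0:ℝ) ≤ lam ^ v.length := pow_nonneg hlam0.le _
    have e1 : volume (word f g v '' Im1 ε) ≤ ENNReal.ofReal (lam ^ v.length) := by
      refine (himg 0 (1/3 - ε) (by linarith) (Or.inl (subset_refl _))).trans
        (ENNReal.ofReal_le_ofReal ?_)
      nlinarith
    have e2 : volume (word f g v '' Iz ε) ≤ ENNReal.ofReal (lam ^ v.length) := by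
      refine (himg (1/3 + ε) (2/3 - ε) (by linarith) (Or.inr (Or.inl (subset_refl _)))).trans
        (ENNReal.ofReal_le_ofReal ?_)
      nlinarith
    have e3 : volume (word f g v '' Ip1 ε) ≤ ENNReal.ofReal (lam ^ v.length) := by
      refine (himg (2/3 + ε) 1 (by linarith) (Or.inr (Or.inr (subset_refl _)))).trans
        (ENNReal.ofReal_le_ofReal ?_)
      nlinarith
    have himU : word f g v '' Λ
        = word f g v '' Im1 ε ∪ word f g v '' Iz ε ∪ word f g v '' Ip1 ε := by
      rw [hΛdef, Set.image_union, Set.image_union]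
    calc volume (word f g v '' Λ)
        ≤ volume (word f g v '' Im1 ε ∪ word f g v '' Iz ε)
          + volume (word f g v '' Ip1 ε) := by
            rw [himU]; exact measure_union_le _ _
      _ ≤ volume (word f g v '' Im1 ε) + volume (word f g v '' Iz ε)
          + volume (word f g v '' Ip1 ε) :=
            add_le_add (measure_union_le _ _) le_rfl
      _ ≤ ENNReal.ofReal (lam ^ v.length) + ENNReal.ofReal (lam ^ v.length)
          + ENNReal.ofReal (lam ^ v.length) := add_le_add (add_le_add e1 e2) e3
      _ = 3 * ENNReal.ofReal (lam ^ v.length) := by ring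
  -- the cover
  have hcover : ∀ n : ℕ, K ⊆ ⋃ c : Fin n → Bool, word f g (List.ofFn c) '' Λ := by
    intro n
    have hUclosed : IsClosed (⋃ c : Fin n → Bool, word f g (List.ofFn c) '' Λ) :=
      isClosed_iUnion_of_finite fun c =>
        (hΛcomp.image (word_continuous hfc hgc _)).isClosed
    rw [← hmin 0 h0K]
    refine closure_minimal ?_ hUclosed
    rintro y ⟨w, hwne, rfl⟩
    have heq : word f g w 0 = word f g (w ++ List.replicate n true) 0 := by
      rw [word_append, word_replicate_true, Function.iterate_fixed hA.f_zero]
    have heq2 : word f g (w ++ List.replicate n true) 0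
        = word f g ((w ++ List.replicate n true).take n)
            (word f g ((w ++ List.replicate n true).drop n) 0) := by
      conv_lhs => rw [← List.take_append_drop n (w ++ List.replicate n true)]
      rw [word_append]
    have hmem : word f g ((w ++ List.replicate n true).drop n) 0 ∈ Λ :=
      word_mapsTo hfΛ hgΛ _ h0Λ
    have hlt : ((w ++ List.replicate n true).take n).length = n := by
      rw [List.length_take]
      simp
    obtain ⟨c, hc⟩ := exists_ofFn_eq _ hlt
    refine Set.mem_iUnion.mpr ⟨c, ?_⟩
    rw [hc, heq, heq2]
    exact mem_image_of_mem _ hmem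
  -- volume K = 0
  have hvol : ∀ n : ℕ, volume K ≤ 2 ^ n * (3 * ENNReal.ofReal (lam ^ n)) := by
    intro n
    calc volume K ≤ volume (⋃ c : Fin n → Bool, word f g (List.ofFn c) '' Λ) :=
          measure_mono (hcover n)
      _ ≤ ∑' c : Fin n → Bool, volume (word f g (List.ofFn c) '' Λ) :=
          measure_iUnion_le _
      _ ≤ ∑' _c : Fin n → Bool, 3 * ENNReal.ofReal (lam ^ n) := by
          refine ENNReal.tsum_le_tsum fun c => ?_
          have h := hvolword (List.ofFn c)
          rwa [List.length_ofFn] at h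
      _ = (Fintype.card (Fin n → Bool) : ENNReal) * (3 * ENNReal.ofReal (lam ^ n)) := by
          rw [tsum_fintype]
          simp [Finset.sum_const, nsmul_eq_mul]
      _ = 2 ^ n * (3 * ENNReal.ofReal (lam ^ n)) := by
          congr 1
          simp [Fintype.card_fun]
  have hvol0 : volume K = 0 := by
    have hbd : ∀ n : ℕ, volume K ≤ ENNReal.ofReal (3 * (2 * lam) ^ n) := by
      intro n
      refine (hvol n).trans (le_of_eq ?_)
      have h2 : (2:ENNReal) = ENNReal.ofReal 2 := by
        rw [ENNReal.ofReal_ofNat]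
      have h3 : (3:ENNReal) = ENNReal.ofReal 3 := by
        rw [ENNReal.ofReal_ofNat]
      rw [h2, h3, ← ENNReal.ofReal_pow (by norm_num),
        ← ENNReal.ofReal_mul (by norm_num),
        ← ENNReal.ofReal_mul (by positivity)]
      congr 1
      ring
    have htend : Filter.Tendsto (fun n : ℕ => ENNReal.ofReal (3 * (2 * lam) ^ n))
        Filter.atTop (nhds 0) := by
      have h1 : Filter.Tendsto (fun n : ℕ => 3 * (2 * lam) ^ n) Filter.atTop (nhds 0) := by
        have h0 := tendsto_pow_atTop_nhds_zero_of_lt_one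
          (by linarith : (0:ℝ) ≤ 2 * lam) (by linarith)
        simpa using h0.const_mul 3
      have h2 := (ENNReal.continuous_ofReal.tendsto 0).comp h1
      simpa only [Function.comp_def, ENNReal.ofReal_zero] using h2
    exact le_zero_iff.mp (ge_of_tendsto' htend hbd)
  -- totally disconnected
  have htd : IsTotallyDisconnected K := by
    intro t hts htp x hx y hy
    by_contra hxy
    have hkey2 : ∀ a b : ℝ, a ∈ t → b ∈ t → a < b → False := by
      intro a b ha hb hab
      have h1 : Set.Icc a b ⊆ K := (htp.Icc_subset ha hb).trans hts
      have h2 : volume (Set.Icc a b) ≤ 0 := hvol0 ▸ measure_mono h1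
      rw [Real.volume_Icc] at h2
      exact absurd h2 (not_le.mpr (ENNReal.ofReal_pos.mpr (sub_pos.mpr hab)))
    rcases lt_trichotomy x y with h | h | h
    · exact hkey2 x y hx hy h
    · exact hxy h
    · exact hkey2 y x hy hx h
  exact ⟨⟨x₀, hx₀⟩, hKcomp, hperfect, htd⟩


end IFSPaper
end
end

section
/- Fix ε∈(0,1/6) and λ∈(0,1/2), set I₋₁:=[0,1/3−ε], I₀:=[1/3+ε,2/3−ε], I₁:=[2/3+ε,1], and let (f,g) ∈ 𝒜 satisfy the inclusion property (f(I₋₁)⊆I₋₁, f(I₀)⊆int(I₋₁), f(I₁)⊆int(I₀), g(I₁)⊆I₁, g(I₀)⊆int(I₁), g(I₋₁)⊆int(I₀)) and the strong uniform contraction property (f′(x)<λ and g′(x)<λ for all x∈I₋₁∪I₀∪I₁). Define Λ₀:=I₋₁∪I₀∪I₁ and Λ_{k+1}:=f(Λ_k)∪g(Λ_k). Then (Λₙ) is a nested decreasing sequence of compact sets, and the Lebesgue measure satisfies μ(Λₙ) ≤ (2λ)ⁿ for every n ≥ 0. -/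
open Set Function MeasureTheory

noncomputable section

namespace IFSPaper

/-- Measure bound for a `C¹` image with derivative bounded by `lam` on the set. -/
lemma image_volume_le {h : ℝ → ℝ} (hC1 : ContDiff ℝ 1 h) {s : Set ℝ}
    (hs : MeasurableSet s) {lam : ℝ}
    (hb : ∀ x ∈ s, |deriv h x| ≤ lam) :
    volume (h '' s) ≤ ENNReal.ofReal lam * volume s := by
  have hder : ∀ x ∈ s, HasFDerivWithinAt h
      ((1 : ℝ →L[ℝ] ℝ).smulRight (deriv h x)) s x := fun x _ =>
    ((hC1.differentiable one_ne_zero x).hasDerivAt.hasFDerivAt).hasFDerivWithinAt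
  calc volume (h '' s)
      ≤ ∫⁻ x in s, ENNReal.ofReal |((1 : ℝ →L[ℝ] ℝ).smulRight (deriv h x)).det| :=
        MeasureTheory.addHaar_image_le_lintegral_abs_det_fderiv volume hs hder
    _ ≤ ∫⁻ _x in s, ENNReal.ofReal lam := by
        apply setLIntegral_mono' hs
        intro x hx
        simp only [ContinuousLinearMap.smulRight_one_eq_toSpanSingleton, ContinuousLinearMap.det_toSpanSingleton]
        exact ENNReal.ofReal_le_ofReal (hb x hx)
    _ = ENNReal.ofReal lam * volume s := by rw [setLIntegral_const]

/-- A `C¹` map on `I` with nowhere-vanishing derivative and `h 0 < h 1` has positive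
derivative on `I`. -/
lemma deriv_pos_on {h : ℝ → ℝ} (hC1 : ContDiff ℝ 1 h)
    (hne : ∀ x ∈ unitI, deriv h x ≠ 0) (hpos : h 0 < h 1) :
    ∀ x ∈ unitI, 0 < deriv h x := by
  have hcont : Continuous (deriv h) := hC1.continuous_deriv le_rfl
  obtain ⟨c, hc, hcslope⟩ := exists_deriv_eq_slope h (by norm_num : (0:ℝ) < 1)
    hC1.continuous.continuousOn ((hC1.differentiable one_ne_zero).differentiableOn)
  have hcpos : 0 < deriv h c := by
    rw [hcslope]; simp only [sub_zero, div_one]; linarith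
  intro x hx
  by_contra hle
  have hxneg : deriv h x < 0 := lt_of_le_of_ne (not_lt.mp hle) (hne x hx)
  have hzero : (0:ℝ) ∈ uIcc (deriv h x) (deriv h c) := by
    rw [Set.mem_uIcc]; left; exact ⟨le_of_lt hxneg, le_of_lt hcpos⟩
  obtain ⟨y, hy, hyz⟩ := intermediate_value_uIcc
    (hcont.continuousOn (s := uIcc x c)) hzero
  have hyI : y ∈ unitI :=
    Set.uIcc_subset_Icc hx (Set.mem_Icc.mpr ⟨le_of_lt hc.1, le_of_lt hc.2⟩) hy
  exact hne y hyI hyz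

/-- appendix example: with `Λ₀ = I₋₁ ∪ I₀ ∪ I₁` and
`Λ_{k+1} = f(Λ_k) ∪ g(Λ_k)`, the `Λₙ` form a nested decreasing sequence of compact sets
with `μ(Λₙ) ≤ (2λ)ⁿ`. -/
theorem appendix_measure_estimate (ε lam : ℝ)
    (hε0 : 0 < ε) (hε : ε < 1/6) (hlam0 : 0 < lam) (hlam : lam < 1/2)
    (f g : ℝ → ℝ) (hA : MemA f g)
    (hinc : InclusionProp f g ε) (hcon : StrongContraction f g ε lam)
    (Λ : ℕ → Set ℝ)
    (hΛ0 : Λ 0 = Im1 ε ∪ Iz ε ∪ Ip1 ε)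
    (hΛs : ∀ k : ℕ, Λ (k + 1) = f '' Λ k ∪ g '' Λ k) :
    (∀ n : ℕ, IsCompact (Λ n)) ∧ (∀ n : ℕ, Λ (n + 1) ⊆ Λ n) ∧
    (∀ n : ℕ, volume (Λ n) ≤ ENNReal.ofReal ((2 * lam) ^ n)) := by
  have hfc : Continuous f := hA.f_c1.continuous
  have hgc : Continuous g := hA.g_c1.continuous
  have hcomp : ∀ n, IsCompact (Λ n) := by
    intro n; induction n with
    | zero => rw [hΛ0]; exact (isCompact_Icc.union isCompact_Icc).union isCompact_Icc
    | succ k ih => rw [hΛs k]; exact (ih.image hfc).union (ih.image hgc)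
  have hsub1 : Λ 1 ⊆ Λ 0 := by
    rw [hΛs 0, hΛ0]
    rintro x (hx | hx) <;> rw [image_union, image_union] at hx
    · rcases hx with (h | h) | h
      · exact Or.inl (Or.inl (hinc.1 h))
      · exact Or.inl (Or.inl (interior_subset (hinc.2.1 h)))
      · exact Or.inl (Or.inr (interior_subset (hinc.2.2.1 h)))
    · rcases hx with (h | h) | h
      · exact Or.inl (Or.inr (interior_subset (hinc.2.2.2.2.2 h)))
      · exact Or.inr (interior_subset (hinc.2.2.2.2.1 h))
      · exact Or.inr (hinc.2.2.2.1 h)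
  have hnest : ∀ n, Λ (n + 1) ⊆ Λ n := by
    intro n; induction n with
    | zero => exact hsub1
    | succ k ih =>
      rw [hΛs (k+1)]
      exact (union_subset_union (image_mono ih) (image_mono ih)).trans
        (hΛs k).superset
  have hΛsub0 : ∀ n, Λ n ⊆ Λ 0 := by
    intro n; induction n with
    | zero => exact subset_rfl
    | succ k ih => exact (hnest k).trans ih
  have hΛ0I : Λ 0 ⊆ unitI := by
    rw [hΛ0]
    refine union_subset (union_subset ?_ ?_) ?_ <;>
      apply Set.Icc_subset_Icc <;> linarith
  have hfpos : ∀ x ∈ unitI, 0 < deriv f x :=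
    deriv_pos_on hA.f_c1 hA.f_deriv_ne
      (by rw [hA.f_zero]; linarith [hA.g0_pos, hA.g0_lt_f1])
  have hgpos : ∀ x ∈ unitI, 0 < deriv g x :=
    deriv_pos_on hA.g_c1 hA.g_deriv_ne
      (by rw [hA.g_one]; linarith [hA.g0_lt_f1, hA.f1_lt_one, hA.g0_pos])
  have habs : ∀ n, ∀ x ∈ Λ n, |deriv f x| ≤ lam ∧ |deriv g x| ≤ lam := by
    intro n x hx
    have hx0 : x ∈ Im1 ε ∪ Iz ε ∪ Ip1 ε := hΛ0 ▸ hΛsub0 n hx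
    have hxI : x ∈ unitI := hΛ0I (hΛsub0 n hx)
    obtain ⟨h1, h2⟩ := hcon x hx0
    exact ⟨by rw [abs_of_pos (hfpos x hxI)]; exact le_of_lt h1,
      by rw [abs_of_pos (hgpos x hxI)]; exact le_of_lt h2⟩
  refine ⟨hcomp, hnest, ?_⟩
  intro n; induction n with
  | zero =>
    simp only [pow_zero, ENNReal.ofReal_one]
    calc volume (Λ 0) ≤ volume unitI := measure_mono hΛ0I
      _ = 1 := by simp [unitI, Real.volume_Icc]
  | succ k ih =>
    have hmk := (hcomp k).measurableSet
    have hf' : volume (f '' Λ k) ≤ ENNReal.ofReal lam * volume (Λ k) :=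
      image_volume_le hA.f_c1 hmk (fun x hx => (habs k x hx).1)
    have hg' : volume (g '' Λ k) ≤ ENNReal.ofReal lam * volume (Λ k) :=
      image_volume_le hA.g_c1 hmk (fun x hx => (habs k x hx).2)
    calc volume (Λ (k + 1)) ≤ volume (f '' Λ k) + volume (g '' Λ k) := by
          rw [hΛs k]; exact measure_union_le _ _
      _ ≤ ENNReal.ofReal lam * ENNReal.ofReal ((2 * lam) ^ k)
          + ENNReal.ofReal lam * ENNReal.ofReal ((2 * lam) ^ k) :=
          add_le_add (hf'.trans (mul_le_mul_right ih _))
            (hg'.trans (mul_le_mul_right ih _))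
      _ = ENNReal.ofReal ((2 * lam) ^ (k + 1)) := by
          rw [← ENNReal.ofReal_mul (le_of_lt hlam0),
            ← ENNReal.ofReal_add (by positivity) (by positivity)]
          congr 1; ring


end IFSPaper
end
end

section
/- Fix ε∈(0,1/6), set I₋₁:=[0,1/3−ε], I₀:=[1/3+ε,2/3−ε], I₁:=[2/3+ε,1], and let (f,g) ∈ 𝒜 satisfy the inclusion property: f(I₋₁)⊆I₋₁, f(I₀)⊆int(I₋₁), f(I₁)⊆int(I₀), g(I₁)⊆I₁, g(I₀)⊆int(I₁), g(I₋₁)⊆int(I₀). Define Λ₀:=I₋₁∪I₀∪I₁, Λ_{k+1}:=f(Λ_k)∪g(Λ_k), and Λ:=⋂ₙΛₙ. Then Λ is a nonempty compact set, the orbit O₊(0) is contained in Λ, and hence the unique minimal set K of ⟨f,g⟩₊ satisfies K ⊆ Λ. -/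
open Set Function MeasureTheory

noncomputable section

namespace IFSPaper

/-- appendix example: under the inclusion property, `Λ = ⋂ₙ Λₙ` is a
nonempty compact set, `O₊(0) ⊆ Λ`, and hence the minimal set `K` satisfies `K ⊆ Λ`. -/
theorem appendix_minimal_set_in_Lambda (ε : ℝ)
    (hε0 : 0 < ε) (hε : ε < 1/6)
    (f g : ℝ → ℝ) (hA : MemA f g) (hinc : InclusionProp f g ε)
    (Λ : ℕ → Set ℝ)
    (hΛ0 : Λ 0 = Im1 ε ∪ Iz ε ∪ Ip1 ε)
    (hΛs : ∀ k : ℕ, Λ (k + 1) = f '' Λ k ∪ g '' Λ k) :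
    (⋂ n : ℕ, Λ n).Nonempty ∧ IsCompact (⋂ n : ℕ, Λ n) ∧
    orbitP f g 0 ⊆ ⋂ n : ℕ, Λ n ∧
    ∀ K : Set ℝ, IsMinimalSet f g K → K ⊆ ⋂ n : ℕ, Λ n := by
  have hcf : Continuous f := hA.f_c1.continuous
  have hcg : Continuous g := hA.g_c1.continuous
  -- Λ₁ ⊆ Λ₀
  have hstep0 : Λ 1 ⊆ Λ 0 := by
    rw [hΛs 0, hΛ0, image_union, image_union, image_union, image_union]
    rintro x (((h | h) | h) | ((h | h) | h))
    · exact Or.inl (Or.inl (hinc.1 h))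
    · exact Or.inl (Or.inl (interior_subset (hinc.2.1 h)))
    · exact Or.inl (Or.inr (interior_subset (hinc.2.2.1 h)))
    · exact Or.inl (Or.inr (interior_subset (hinc.2.2.2.2.2 h)))
    · exact Or.inr (interior_subset (hinc.2.2.2.2.1 h))
    · exact Or.inr (hinc.2.2.2.1 h)
  have hsucc : ∀ n, Λ (n + 1) ⊆ Λ n := by
    intro n
    induction n with
    | zero => exact hstep0
    | succ m ih =>
      rw [hΛs m, hΛs (m + 1)]
      exact union_subset_union (image_mono ih) (image_mono ih)
  have hanti : Antitone Λ := antitone_nat_of_succ_le hsucc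
  -- 0 ∈ Λ n for all n
  have hzero : ∀ n, (0 : ℝ) ∈ Λ n := by
    intro n
    induction n with
    | zero =>
      rw [hΛ0]
      exact Or.inl (Or.inl ⟨le_refl 0, by linarith⟩)
    | succ m ih =>
      rw [hΛs m]
      exact Or.inl ⟨0, ih, hA.f_zero⟩
  -- words map Λ n into Λ (len + n)
  have hword : ∀ (w : List Bool) (x : ℝ) (n : ℕ), x ∈ Λ n →
      word f g w x ∈ Λ (w.length + n) := by
    intro w
    induction w with
    | nil => intro x n hx; simpa [word] using hx
    | cons b t ih =>
      intro x n hx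
      have ht := ih x n hx
      have : (if b then f else g) (word f g t x) ∈ Λ (t.length + n + 1) := by
        rw [hΛs (t.length + n)]
        cases b with
        | true => exact Or.inl ⟨word f g t x, ht, rfl⟩
        | false => exact Or.inr ⟨word f g t x, ht, rfl⟩
      simpa [word, Nat.succ_add, Nat.add_assoc, Nat.add_comm, Nat.add_left_comm] using this
  -- orbit of 0 contained in the intersection
  have horb : orbitP f g 0 ⊆ ⋂ n : ℕ, Λ n := by
    rintro y ⟨w, -, hw⟩
    refine mem_iInter.2 fun n => ?_
    have := hword w 0 n (hzero n)
    rw [hw] at this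
    exact hanti (Nat.le_add_left n w.length) this
  -- each Λ n is compact
  have hcomp : ∀ n, IsCompact (Λ n) := by
    intro n
    induction n with
    | zero =>
      rw [hΛ0]
      exact ((isCompact_Icc.union isCompact_Icc).union isCompact_Icc)
    | succ m ih =>
      rw [hΛs m]
      exact (ih.image hcf).union (ih.image hcg)
  have hclosed : IsClosed (⋂ n : ℕ, Λ n) :=
    isClosed_iInter fun n => (hcomp n).isClosed
  have hcompΛ : IsCompact (⋂ n : ℕ, Λ n) :=
    (hcomp 0).of_isClosed_subset hclosed (iInter_subset _ 0)
  have hne : (⋂ n : ℕ, Λ n).Nonempty :=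
    ⟨0, mem_iInter.2 hzero⟩
  refine ⟨hne, hcompΛ, horb, ?_⟩
  -- minimal sets
  rintro K ⟨hKne, hKI, hKmin⟩
  obtain ⟨x, hx⟩ := hKne
  have hxI : x ∈ unitI := hKI hx
  -- iterates of f stay in unitI
  have hiter : ∀ n, f^[n] x ∈ unitI := by
    intro n
    induction n with
    | zero => simpa using hxI
    | succ m ih =>
      rw [Function.iterate_succ_apply']
      exact hA.f_maps ih
  -- f y ≤ y on unitI
  have hfle : ∀ y ∈ unitI, f y ≤ y := by
    rintro y ⟨hy0, hy1⟩
    rcases eq_or_lt_of_le hy0 with h0 | h0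
    · rw [← h0, hA.f_zero]
    · rcases eq_or_lt_of_le hy1 with h1 | h1
      · rw [h1]; exact le_of_lt (h1 ▸ hA.f1_lt_one)
      · exact le_of_lt (hA.f_lt_id y ⟨h0, h1⟩)
  have hantiseq : Antitone (fun n => f^[n] x) := by
    refine antitone_nat_of_succ_le fun n => ?_
    rw [Function.iterate_succ_apply']
    exact hfle _ (hiter n)
  have hbdd : BddBelow (Set.range fun n => f^[n] x) :=
    ⟨0, by rintro y ⟨n, rfl⟩; exact (hiter n).1⟩
  set L : ℝ := ⨅ n, f^[n] x with hL
  have htend : Filter.Tendsto (fun n => f^[n] x) Filter.atTop (nhds L) :=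
    tendsto_atTop_ciInf hantiseq hbdd
  have hLI : L ∈ unitI := by
    have : IsClosed unitI := isClosed_Icc
    exact this.mem_of_tendsto htend (Filter.Eventually.of_forall hiter)
  have htend' : Filter.Tendsto (fun n => f^[n + 1] x) Filter.atTop (nhds L) :=
    htend.comp (Filter.tendsto_add_atTop_nat 1)
  have hfL : f L = L := by
    have h1 : Filter.Tendsto (fun n => f (f^[n] x)) Filter.atTop (nhds (f L)) :=
      (hcf.tendsto L).comp htend
    have h2 : Filter.Tendsto (fun n => f (f^[n] x)) Filter.atTop (nhds L) := by
      have : (fun n => f (f^[n] x)) = fun n => f^[n + 1] x := by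
        funext n; rw [Function.iterate_succ_apply']
      rw [this]; exact htend'
    exact tendsto_nhds_unique h1 h2
  have hL0 : L = 0 := by
    rcases eq_or_lt_of_le hLI.1 with h0 | h0
    · exact h0.symm
    · rcases eq_or_lt_of_le hLI.2 with h1 | h1
      · exfalso
        have := hA.f1_lt_one
        rw [h1] at hfL
        linarith
      · exfalso
        have := hA.f_lt_id L ⟨h0, h1⟩
        linarith
  -- hence 0 ∈ closure (orbit x)
  have hwrep : ∀ n : ℕ, word f g (List.replicate n true) x = f^[n] x := by
    intro n
    induction n with
    | zero => simp [word]
    | succ m ih =>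
      rw [List.replicate_succ, Function.iterate_succ_apply']
      simp only [word, Function.comp_apply, if_pos, ih]
  have h0cl : (0 : ℝ) ∈ closure (orbitP f g x) := by
    rw [← hL0]
    refine mem_closure_of_tendsto htend' (Filter.Eventually.of_forall fun n => ?_)
    exact ⟨List.replicate (n + 1) true, by simp, hwrep (n + 1)⟩
  have h0K : (0 : ℝ) ∈ K := by
    rw [← hKmin x hx]; exact h0cl
  have hKeq : K = closure (orbitP f g 0) := (hKmin 0 h0K).symm
  rw [hKeq]
  exact hclosed.closure_subset_iff.2 horb

end IFSPaper
end
end
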